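/- Let X be a vector space and T : X → X a linear map. If for some d ∈ ℕ₀ one has R(T) + N(T^{d}) = R(T) + N(T^{n}) for all n ≥ d (uniform descent for n ≥ d), then the induced quantities k_n(T) = dim((R(T^n) ∩ N(T))/(R(T^{n+1}) ∩ N(T))) vanish for all n ≥ d. -/
import Mathlib


/-- If `R(T) + N(T^n) = R(T) + N(T^d)` for all `n ≥ d` (uniform descent for
`n ≥ d`), then `k_n(T) = dim ((R(T^n) ⊓ N(T)) / (R(T^{n+1}) ⊓ N(T))) = 0` for
all `n ≥ d`. -/
theorem kn_eq_zero_of_uniform_descent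
    {K : Type*} [Field K] {X : Type*} [AddCommGroup X] [Module K X]
    (T : Module.End K X) (d : ℕ)
    (h : ∀ n ≥ d, LinearMap.range T ⊔ LinearMap.ker (T ^ n) =
        LinearMap.range T ⊔ LinearMap.ker (T ^ d)) :
    ∀ n ≥ d, Module.rank K
      (↥(LinearMap.range (T ^ n) ⊓ LinearMap.ker T) ⧸
        (LinearMap.range (T ^ (n + 1)) ⊓ LinearMap.ker T).comap
          (LinearMap.range (T ^ n) ⊓ LinearMap.ker T).subtype) = 0 := by
  intro n hn
  -- key: R(T^n) ⊓ N(T) ≤ R(T^{n+1}) ⊓ N(T)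
  have hker : LinearMap.ker (T ^ (n + 1)) ≤
      LinearMap.range T ⊔ LinearMap.ker (T ^ n) := by
    rw [h n hn, ← h (n + 1) (le_trans hn (Nat.le_succ n))]
    exact le_sup_right
  have key : LinearMap.range (T ^ n) ⊓ LinearMap.ker T ≤
      LinearMap.range (T ^ (n + 1)) ⊓ LinearMap.ker T := by
    rintro x ⟨⟨y, hy⟩, hx⟩
    refine ⟨?_, hx⟩
    have hy' : y ∈ LinearMap.ker (T ^ (n + 1)) := by
      simp only [LinearMap.mem_ker] at hx ⊢
      rw [pow_succ', Module.End.mul_apply, hy]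
      exact hx
    obtain ⟨a, ⟨z, hz⟩, b, hb, hab⟩ := Submodule.mem_sup.mp (hker hy')
    have : x = (T ^ (n + 1)) z := by
      rw [← hy, ← hab, map_add, pow_succ, Module.End.mul_apply, hz,
        LinearMap.mem_ker.mp hb, add_zero]
    exact ⟨z, this.symm⟩
  have htop : (LinearMap.range (T ^ (n + 1)) ⊓ LinearMap.ker T).comap
      (LinearMap.range (T ^ n) ⊓ LinearMap.ker T).subtype = ⊤ := by
    rw [eq_top_iff]
    rintro ⟨x, hx⟩ _
    exact key hx
  rw [htop]
  haveI : Subsingleton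
      (↥(LinearMap.range (T ^ n) ⊓ LinearMap.ker T) ⧸
        (⊤ : Submodule K ↥(LinearMap.range (T ^ n) ⊓ LinearMap.ker T))) :=
    Submodule.Quotient.subsingleton_iff.mpr rfl
  exact rank_subsingleton' K _
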